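/- Let c₁,…,c_s be distinct real numbers, let u₁,…,u_s : ℝ → ℝ be twice differentiable, let t ∈ ℝ and h ≠ 0, and suppose the matrix F(t,h) is nonsingular. Then there exists exactly one triple (A, b, d) ∈ ℝ^{s×s} × ℝ^s × ℝ^s satisfying, for every k = 1,…,s: u_k(t+h) = u_k(t) + h·u_k'(t) + h²·Σ_{j=1}^s b_j·u_k''(t+c_j h); u_k'(t+h) = u_k'(t) + h·Σ_{j=1}^s d_j·u_k''(t+c_j h); and u_k(t+c_i h) = u_k(t) + c_i h·u_k'(t) + h²·Σ_{j=1}^s a_{ij}·u_k''(t+c_j h) for all i = 1,…,s. Moreover A = h^{-2}·E(t,h)·F(t,h)^{-1}. -/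

import Mathlib

open Matrix BigOperators

/-- The fitting conditions defining the coefficients `(A, b, d)` of an `s`-stage FRKN method
with respect to basis functions `u₁, …, u_s` and collocation parameters `c₁, …, c_s`,
at time `t` with stepsize `h`. -/
def FRKNfit (s : ℕ) (c : Fin s → ℝ) (u : Fin s → ℝ → ℝ) (t h : ℝ)
    (p : Matrix (Fin s) (Fin s) ℝ × (Fin s → ℝ) × (Fin s → ℝ)) : Prop :=
  ∀ k : Fin s,
    (u k (t + h) = u k t + h * deriv (u k) t +
      h ^ 2 * ∑ j, p.2.1 j * deriv (deriv (u k)) (t + c j * h)) ∧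
    (deriv (u k) (t + h) = deriv (u k) t +
      h * ∑ j, p.2.2 j * deriv (deriv (u k)) (t + c j * h)) ∧
    (∀ i, u k (t + c i * h) = u k t + c i * h * deriv (u k) t +
      h ^ 2 * ∑ j, p.1 i j * deriv (deriv (u k)) (t + c j * h))

theorem stmt_0 (s : ℕ) (c : Fin s → ℝ) (hc : Function.Injective c)
    (u : Fin s → ℝ → ℝ)
    (hu : ∀ k, Differentiable ℝ (u k) ∧ Differentiable ℝ (deriv (u k)))
    (t h : ℝ) (hh : h ≠ 0)
    (E F : Matrix (Fin s) (Fin s) ℝ)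
    (hE : E = Matrix.of fun i k : Fin s =>
      u k (t + c i * h) - u k t - c i * h * deriv (u k) t)
    (hF : F = Matrix.of fun i k : Fin s => deriv (deriv (u k)) (t + c i * h))
    (hFinv : IsUnit F.det) :
    (∃! p : Matrix (Fin s) (Fin s) ℝ × (Fin s → ℝ) × (Fin s → ℝ),
        FRKNfit s c u t h p) ∧
    (∀ p : Matrix (Fin s) (Fin s) ℝ × (Fin s → ℝ) × (Fin s → ℝ),
        FRKNfit s c u t h p → p.1 = (h ^ 2)⁻¹ • (E * F⁻¹)) := by
  have h2 : (h ^ 2 : ℝ) ≠ 0 := pow_ne_zero _ hh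
  set v : Fin s → ℝ := fun k => (u k (t + h) - u k t - h * deriv (u k) t) / h ^ 2 with hv
  set w : Fin s → ℝ := fun k => (deriv (u k) (t + h) - deriv (u k) t) / h with hw
  have key : ∀ p : Matrix (Fin s) (Fin s) ℝ × (Fin s → ℝ) × (Fin s → ℝ),
      FRKNfit s c u t h p ↔
      (p.1 * F = (h ^ 2)⁻¹ • E ∧ Matrix.vecMul p.2.1 F = v ∧ Matrix.vecMul p.2.2 F = w) := by
    subst hE hF
    rintro ⟨A, b, d⟩
    simp only [FRKNfit]
    constructor
    · intro hp
      refine ⟨?_, ?_, ?_⟩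
      · ext i k
        have h1 := (hp k).2.2 i
        simp only [Matrix.mul_apply, Matrix.smul_apply, Matrix.of_apply, smul_eq_mul]
        field_simp
        rw [mul_comm h (c i)]
        linarith
      · funext k
        have h1 := (hp k).1
        simp only [Matrix.vecMul, dotProduct, hv, Matrix.of_apply]
        field_simp
        linarith
      · funext k
        have h1 := (hp k).2.1
        simp only [Matrix.vecMul, dotProduct, hw, Matrix.of_apply]
        field_simp
        linarith
    · rintro ⟨hA, hb, hd⟩ k
      refine ⟨?_, ?_, fun i => ?_⟩
      · have h1 := congrFun hb k
        simp only [Matrix.vecMul, dotProduct, hv, Matrix.of_apply] at h1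
        rw [h1]
        field_simp
        ring
      · have h1 := congrFun hd k
        simp only [Matrix.vecMul, dotProduct, hw, Matrix.of_apply] at h1
        rw [h1]
        field_simp
        ring
      · have h1 := congrFun (congrFun hA i) k
        simp only [Matrix.mul_apply, Matrix.smul_apply, Matrix.of_apply, smul_eq_mul] at h1
        rw [h1]
        field_simp
        ring
  have hsolve : ∀ p : Matrix (Fin s) (Fin s) ℝ × (Fin s → ℝ) × (Fin s → ℝ),
      FRKNfit s c u t h p →
      p = ((h ^ 2)⁻¹ • (E * F⁻¹), Matrix.vecMul v F⁻¹, Matrix.vecMul w F⁻¹) := by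
    intro p hp
    obtain ⟨hA, hb, hd⟩ := (key p).mp hp
    have e1 : p.1 = (h ^ 2)⁻¹ • (E * F⁻¹) := by
      have := congrArg (· * F⁻¹) hA
      simpa [Matrix.mul_assoc, Matrix.mul_nonsing_inv _ hFinv, Matrix.smul_mul] using this
    have e2 : p.2.1 = Matrix.vecMul v F⁻¹ := by
      have := congrArg (fun x => Matrix.vecMul x F⁻¹) hb
      simpa [Matrix.vecMul_vecMul, Matrix.mul_nonsing_inv _ hFinv] using this
    have e3 : p.2.2 = Matrix.vecMul w F⁻¹ := by
      have := congrArg (fun x => Matrix.vecMul x F⁻¹) hd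
      simpa [Matrix.vecMul_vecMul, Matrix.mul_nonsing_inv _ hFinv] using this
    exact Prod.ext e1 (Prod.ext e2 e3)
  have hfit : FRKNfit s c u t h ((h ^ 2)⁻¹ • (E * F⁻¹), Matrix.vecMul v F⁻¹, Matrix.vecMul w F⁻¹) := by
    apply (key _).mpr
    refine ⟨?_, ?_, ?_⟩
    · simp only [Matrix.smul_mul, Matrix.mul_assoc, Matrix.nonsing_inv_mul _ hFinv, Matrix.mul_one]
    · simp [Matrix.vecMul_vecMul, Matrix.nonsing_inv_mul _ hFinv]
    · simp [Matrix.vecMul_vecMul, Matrix.nonsing_inv_mul _ hFinv]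
  exact ⟨⟨_, hfit, fun q hq => hsolve q hq⟩, fun p hp => congrArg Prod.fst (hsolve p hp)⟩
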